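/- Let V be a finite set and V_0, V_1, ..., V_k subsets with V = ⋃_{i=0}^k V_i satisfying the running intersection property: for every 1 ≤ j ≤ k there exists s < j such that V_j ∩ (⋃_{i=0}^{j-1} V_i) ⊆ V_s. Then the graph on vertex set V whose edge set is the union of the complete graphs on each V_i is chordal. -/

import Mathlib

open Finset SimpleGraph

/-- A graph is chordal if every cycle of length at least 4 has a chord, i.e.
an edge of the graph joining two vertices of the cycle which is not an edge of
the cycle (equivalently, joining two nonconsecutive vertices of the cycle). -/
def IsChordal {V : Type*} (G : SimpleGraph V) : Prop :=
  ∀ ⦃v : V⦄ (w : G.Walk v v), w.IsCycle → 4 ≤ w.length →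
    ∃ a b, a ∈ w.support ∧ b ∈ w.support ∧ G.Adj a b ∧ s(a, b) ∉ w.edges

namespace AuxRIC
variable {V : Type*} {G : SimpleGraph V}

lemma getVert_support_getElem? {u v : V} (w : G.Walk u v) {n : ℕ} (hn : n ≤ w.length) :
    w.support[n]? = some (w.getVert n) := by
  induction w generalizing n with
  | nil =>
    simp only [SimpleGraph.Walk.length_nil, Nat.le_zero] at hn
    subst hn
    simp [SimpleGraph.Walk.getVert_zero]
  | cons h p ih =>
    cases n with
    | zero => simp [SimpleGraph.Walk.getVert_zero]
    | succ n =>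
      simp only [SimpleGraph.Walk.support_cons, SimpleGraph.Walk.getVert_cons_succ,
        List.getElem?_cons_succ]
      exact ih (by simpa [Nat.succ_le_succ_iff] using hn)

lemma exists_getVert_of_mem_edges {u v : V} (w : G.Walk u v) {e : Sym2 V} (he : e ∈ w.edges) :
    ∃ t < w.length, e = s(w.getVert t, w.getVert (t+1)) := by
  induction w with
  | nil => simp at he
  | cons h p ih =>
    rw [SimpleGraph.Walk.edges_cons, List.mem_cons] at he
    rcases he with he | he
    · refine ⟨0, by simp, ?_⟩
      simp only [SimpleGraph.Walk.getVert_zero, SimpleGraph.Walk.getVert_cons_succ]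
      simpa [SimpleGraph.Walk.getVert_zero] using he
    · obtain ⟨t, ht, rfl⟩ := ih he
      exact ⟨t + 1, by simpa using Nat.succ_lt_succ ht, rfl⟩

lemma cycle_getVert_injOn {u : V} {w : G.Walk u u} (hw : w.IsCycle) :
    ∀ a, 1 ≤ a → a ≤ w.length → ∀ b, 1 ≤ b → b ≤ w.length →
      w.getVert a = w.getVert b → a = b := by
  intro a ha1 haL b hb1 hbL hab
  have hnd : w.support.tail.Nodup := hw.2
  have hlen : w.support.tail.length = w.length := by
    have := w.length_support
    have h2 : w.support.length = w.support.tail.length + 1 := by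
      conv_lhs => rw [w.support_eq_cons]
      simp
    omega
  have key : ∀ n, 1 ≤ n → n ≤ w.length → w.support.tail[n-1]? = some (w.getVert n) := by
    intro n hn1 hnL
    have : w.support.tail[n-1]? = w.support[(n-1)+1]? := List.getElem?_tail
    rw [List.getElem?_tail]
    rw [show n - 1 + 1 = n by omega]
    exact getVert_support_getElem? w hnL
  have ha := key a ha1 haL
  have hb := key b hb1 hbL
  rw [hab] at ha
  have := (List.getElem?_inj (by omega : a - 1 < w.support.tail.length) hnd).mp (ha.trans hb.symm)
  omega

lemma core {V : Type*} (k L : ℕ) (Vs : ℕ → Set V) (g : ℕ → V)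
    (hL : 4 ≤ L)
    (hg0 : g L = g 0)
    (hginj : ∀ a, a < L → ∀ b, b < L → g a = g b → a = b)
    (hP : ∀ t, t < L → ∃ i, i ≤ k ∧ g t ∈ Vs i ∧ g (t + 1) ∈ Vs i)
    (hRIP : ∀ j, 1 ≤ j → j ≤ k → ∃ s < j, Vs j ∩ (⋃ i < j, Vs i) ⊆ Vs s) :
    ∃ pa pb, pa ≤ L ∧ pb ≤ L ∧ g pa ≠ g pb ∧
      (∃ i, i ≤ k ∧ g pa ∈ Vs i ∧ g pb ∈ Vs i) ∧
      ∀ t, t < L → s(g pa, g pb) ≠ s(g t, g (t + 1)) := by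
  classical
  have hL0 : 0 < L := by omega
  set idx : ℕ → ℕ := fun t => sInf {i | i ≤ k ∧ g t ∈ Vs i ∧ g (t + 1) ∈ Vs i} with hidxdef
  have hidxmem : ∀ t, t < L → idx t ≤ k ∧ g t ∈ Vs (idx t) ∧ g (t + 1) ∈ Vs (idx t) := by
    intro t ht
    exact Nat.sInf_mem (hP t ht)
  have hidxle : ∀ t i, i ≤ k → g t ∈ Vs i → g (t + 1) ∈ Vs i → idx t ≤ i := by
    intro t i h1 h2 h3
    exact Nat.sInf_le ⟨h1, h2, h3⟩
  have hrne : (Finset.range L).Nonempty := ⟨0, by simp [hL0]⟩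
  set j := (Finset.range L).sup' hrne idx with hjdef
  obtain ⟨i0, hi0mem, hi0⟩ := Finset.exists_mem_eq_sup' hrne idx
  have hi0L : i0 < L := Finset.mem_range.mp hi0mem
  have hji0 : idx i0 = j := hi0.symm
  have hjk : j ≤ k := by rw [← hji0]; exact (hidxmem i0 hi0L).1
  have hidxj : ∀ t, t < L → idx t ≤ j := fun t ht => Finset.le_sup' idx (Finset.mem_range.mpr ht)
  set r := i0 + 1 with hrdef
  have hrL : r ≤ L := by omega
  set y : ℕ → V := fun t => g ((r + t) % L) with hydef
  have hyd : ∀ t, y t = g ((r + t) % L) := fun t => by rw [hydef]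
  have hgmod : ∀ n, n ≤ L → g n = g (n % L) := by
    intro n hn
    rcases Nat.lt_or_ge n L with h | h
    · rw [Nat.mod_eq_of_lt h]
    · have hnL : n = L := by omega
      subst hnL
      rw [Nat.mod_self, hg0]
  have hymod : ∀ t, y t = y (t % L) := by
    intro t
    rw [hyd, hyd]
    congr 1
    exact (Nat.add_mod_mod r t L).symm
  have hy_succ : ∀ s, y (s + 1) = g ((r + s) % L + 1) := by
    intro s
    have hm : (r + s) % L < L := Nat.mod_lt _ hL0
    have h1 : y (s + 1) = g ((r + s + 1) % L) := by
      rw [hyd, ← Nat.add_assoc]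
    rw [h1, hgmod ((r + s) % L + 1) (by omega)]
    congr 1
    exact (Nat.mod_add_mod (r + s) L 1).symm
  have hyinj : ∀ a, a < L → ∀ b, b < L → y a = y b → a = b := by
    intro a ha b hb h
    rw [hyd, hyd] at h
    have h2 : (r + a) % L = (r + b) % L :=
      hginj _ (Nat.mod_lt _ hL0) _ (Nat.mod_lt _ hL0) h
    have h3 : a % L = b % L := Nat.ModEq.add_left_cancel' r h2
    rwa [Nat.mod_eq_of_lt ha, Nat.mod_eq_of_lt hb] at h3
  have hsurj : ∀ t, t < L → ∃ s, s < L ∧ y s = g t ∧ y (s + 1) = g (t + 1) := by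
    intro t ht
    have hkey : (r + (t + L - r) % L) % L = t := by
      rw [Nat.add_mod_mod, show r + (t + L - r) = t + L by omega,
        Nat.add_mod_right, Nat.mod_eq_of_lt ht]
    exact ⟨(t + L - r) % L, Nat.mod_lt _ hL0,
      by rw [hyd, hkey], by rw [hy_succ, hkey]⟩
  have hedge : ∀ s, ∃ m, m < L ∧ g m = y s ∧ g (m + 1) = y (s + 1) := by
    intro s
    exact ⟨(r + s) % L, Nat.mod_lt _ hL0, (hyd s).symm, (hy_succ s).symm⟩
  have hkeyarith : ∀ pa pb, pa < pb → pb < L → pa + 2 ≤ pb → ¬(pa = 0 ∧ pb + 1 = L) →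
      ∀ s, s < L → s(y pa, y pb) ≠ s(y s, y (s + 1)) := by
    intro pa pb h1 h2 h3 h4 s hs heq
    rw [hymod (s + 1)] at heq
    have hsL : (s + 1) % L < L := Nat.mod_lt _ hL0
    have hval : ((s + 1) % L = 0 ∧ s + 1 = L) ∨ ((s + 1) % L = s + 1 ∧ s + 1 < L) := by
      rcases Nat.lt_or_ge (s + 1) L with h | h
      · right; exact ⟨Nat.mod_eq_of_lt h, h⟩
      · left
        have hsl : s + 1 = L := by omega
        exact ⟨by rw [hsl, Nat.mod_self], hsl⟩
    rw [Sym2.eq_iff] at heq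
    rcases heq with ⟨e1, e2⟩ | ⟨e1, e2⟩
    · have ha := hyinj pa (by omega) s hs e1
      have hb := hyinj pb h2 _ hsL e2
      omega
    · have ha := hyinj pa (by omega) _ hsL e1
      have hb := hyinj pb h2 s hs e2
      omega
  have final : ∀ pa pb, pa < pb → pb < L → pa + 2 ≤ pb → ¬(pa = 0 ∧ pb + 1 = L) →
      (∃ i, i ≤ k ∧ y pa ∈ Vs i ∧ y pb ∈ Vs i) →
      ∃ qa qb, qa ≤ L ∧ qb ≤ L ∧ g qa ≠ g qb ∧
        (∃ i, i ≤ k ∧ g qa ∈ Vs i ∧ g qb ∈ Vs i) ∧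
        ∀ t, t < L → s(g qa, g qb) ≠ s(g t, g (t + 1)) := by
    rintro pa pb h1 h2 h3 h4 ⟨i, hik, hai, hbi⟩
    refine ⟨(r + pa) % L, (r + pb) % L, (Nat.mod_lt _ hL0).le, (Nat.mod_lt _ hL0).le, ?_, ?_, ?_⟩
    · rw [← hyd, ← hyd]
      intro h
      have := hyinj pa (by omega) pb h2 h
      omega
    · exact ⟨i, hik, (hyd pa) ▸ hai, (hyd pb) ▸ hbi⟩
    · intro t ht heq
      rw [← hyd, ← hyd] at heq
      obtain ⟨s, hs, e1, e2⟩ := hsurj t ht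
      rw [← e1, ← e2] at heq
      exact hkeyarith pa pb h1 h2 h3 h4 s hs heq
  by_cases hall : ∀ t, t < L → y t ∈ Vs j
  · exact final 0 2 (by omega) (by omega) (by omega) (by omega)
      ⟨j, hjk, hall 0 (by omega), hall 2 (by omega)⟩
  · push_neg at hall
    obtain ⟨t0, ht0L, ht0⟩ := hall
    have hy0 : y 0 = g (i0 + 1) := by
      rw [hyd, Nat.add_zero, ← hgmod r hrL, hrdef]
    have hyL1 : y (L - 1) = g i0 := by
      rw [hyd]
      congr 1
      rw [show r + (L - 1) = i0 + L by omega, Nat.add_mod_right, Nat.mod_eq_of_lt hi0L]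
    have h0j : y 0 ∈ Vs j := by
      rw [hy0, ← hji0]; exact (hidxmem i0 hi0L).2.2
    have hL1j : y (L - 1) ∈ Vs j := by
      rw [hyL1, ← hji0]; exact (hidxmem i0 hi0L).2.1
    set T := (Finset.range L).filter (fun t => y t ∉ Vs j) with hTdef
    have hTne : T.Nonempty := ⟨t0, by
      rw [hTdef, Finset.mem_filter, Finset.mem_range]
      exact ⟨ht0L, ht0⟩⟩
    set t1 := T.min' hTne with ht1def
    set t2 := T.max' hTne with ht2def
    have hmemT : ∀ x, x ∈ T ↔ x < L ∧ y x ∉ Vs j := by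
      intro x
      rw [hTdef, Finset.mem_filter, Finset.mem_range]
    have ht1T : t1 < L ∧ y t1 ∉ Vs j := (hmemT t1).mp (T.min'_mem hTne)
    have ht2T : t2 < L ∧ y t2 ∉ Vs j := (hmemT t2).mp (T.max'_mem hTne)
    have h0T : (0 : ℕ) ∉ T := fun hx => ((hmemT 0).mp hx).2 h0j
    have hL1T : (L - 1) ∉ T := fun hx => ((hmemT (L - 1)).mp hx).2 hL1j
    have ht11 : 1 ≤ t1 := by
      rcases Nat.eq_zero_or_pos t1 with h | h
      · exact absurd (h ▸ T.min'_mem hTne) h0T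
      · exact h
    have ht2L : t2 ≤ L - 2 := by
      have h1 : t2 ≠ L - 1 := fun h => hL1T (h ▸ T.max'_mem hTne)
      have := ht2T.1
      omega
    have ht12 : t1 ≤ t2 := T.min'_le _ (T.max'_mem hTne)
    set pa := t1 - 1 with hpadef
    set pb := t2 + 1 with hpbdef
    have hpaj : y pa ∈ Vs j := by
      by_contra h
      have hmem : pa ∈ T := (hmemT pa).mpr ⟨by omega, h⟩
      have := T.min'_le _ hmem
      omega
    have hpbj : y pb ∈ Vs j := by
      by_contra h
      have hmem : pb ∈ T := (hmemT pb).mpr ⟨by omega, h⟩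
      have := T.le_max' _ hmem
      omega
    obtain ⟨m1, hm1L, hm1a, hm1b⟩ := hedge pa
    have hpa1 : pa + 1 = t1 := by omega
    rw [hpa1] at hm1b
    have hm1j : idx m1 < j := by
      have hle := hidxj m1 hm1L
      rcases Nat.lt_or_ge (idx m1) j with h | h
      · exact h
      · exfalso
        have heqj : idx m1 = j := by omega
        have hmm := (hidxmem m1 hm1L).2.2
        rw [heqj, hm1b] at hmm
        exact ht1T.2 hmm
    obtain ⟨m2, hm2L, hm2a, hm2b⟩ := hedge t2
    have hm2j : idx m2 < j := by
      have hle := hidxj m2 hm2L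
      rcases Nat.lt_or_ge (idx m2) j with h | h
      · exact h
      · exfalso
        have heqj : idx m2 = j := by omega
        have hmm := (hidxmem m2 hm2L).2.1
        rw [heqj, hm2a] at hmm
        exact ht2T.2 hmm
    have hj1 : 1 ≤ j := by omega
    obtain ⟨s0, hs0j, hsub⟩ := hRIP j hj1 hjk
    have hpas0 : y pa ∈ Vs s0 := by
      apply hsub
      refine ⟨hpaj, Set.mem_iUnion₂.mpr ⟨idx m1, hm1j, ?_⟩⟩
      rw [← hm1a]
      exact (hidxmem m1 hm1L).2.1
    have hpbs0 : y pb ∈ Vs s0 := by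
      apply hsub
      refine ⟨hpbj, Set.mem_iUnion₂.mpr ⟨idx m2, hm2j, ?_⟩⟩
      rw [← hm2b]
      exact (hidxmem m2 hm2L).2.2
    by_cases hend : pa = 0 ∧ pb + 1 = L
    · exfalso
      have hpa0 : pa = 0 := hend.1
      have hpbL1 : pb = L - 1 := by omega
      rw [hpa0, hy0] at hpas0
      rw [hpbL1, hyL1] at hpbs0
      have := hidxle i0 s0 (by omega) hpbs0 hpas0
      omega
    · exact final pa pb (by omega) (by omega) (by omega) hend ⟨s0, by omega, hpas0, hpbs0⟩


end AuxRIC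

theorem running_intersection_chordal {V : Type*} [Fintype V]
    (k : ℕ) (Vs : ℕ → Set V)
    (hcover : ∀ v : V, ∃ i ≤ k, v ∈ Vs i)
    (hRIP : ∀ j, 1 ≤ j → j ≤ k → ∃ s < j, Vs j ∩ (⋃ i < j, Vs i) ⊆ Vs s) :
    IsChordal (SimpleGraph.fromRel fun a b => ∃ i ≤ k, a ∈ Vs i ∧ b ∈ Vs i) := by
  intro v w hcyc hlen
  set L := w.length with hLdef
  set g : ℕ → V := w.getVert with hgdef
  have hg0 : g L = g 0 := by
    rw [hgdef, hLdef, SimpleGraph.Walk.getVert_length, SimpleGraph.Walk.getVert_zero]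
  have hginj : ∀ a, a < L → ∀ b, b < L → g a = g b → a = b := by
    intro a ha b hb hab
    rcases Nat.eq_zero_or_pos a with ha0 | ha0
    · rcases Nat.eq_zero_or_pos b with hb0 | hb0
      · omega
      · subst ha0
        have h2 : g L = g b := by rw [hg0]; exact hab
        have := AuxRIC.cycle_getVert_injOn hcyc L (by omega) le_rfl b (by omega) (by omega) h2
        omega
    · rcases Nat.eq_zero_or_pos b with hb0 | hb0
      · subst hb0
        have h2 : g a = g L := by rw [hg0]; exact hab
        have := AuxRIC.cycle_getVert_injOn hcyc a (by omega) (by omega) L (by omega) le_rfl h2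
        omega
      · exact AuxRIC.cycle_getVert_injOn hcyc a (by omega) (by omega) b (by omega) (by omega) hab
  have hP : ∀ t, t < L → ∃ i, i ≤ k ∧ g t ∈ Vs i ∧ g (t + 1) ∈ Vs i := by
    intro t ht
    have hadj := w.adj_getVert_succ ht
    rw [SimpleGraph.fromRel_adj] at hadj
    rcases hadj.2 with ⟨i, hik, h1, h2⟩ | ⟨i, hik, h1, h2⟩
    · exact ⟨i, hik, h1, h2⟩
    · exact ⟨i, hik, h2, h1⟩
  obtain ⟨pa, pb, hpaL, hpbL, hne, ⟨i, hik, hai, hbi⟩, hnon⟩ :=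
    AuxRIC.core k L Vs g hlen hg0 hginj hP hRIP
  refine ⟨g pa, g pb, ?_, ?_, ?_, ?_⟩
  · exact SimpleGraph.Walk.mem_support_iff_exists_getVert.mpr
      ⟨pa, (congrFun hgdef pa).symm, hpaL⟩
  · exact SimpleGraph.Walk.mem_support_iff_exists_getVert.mpr
      ⟨pb, (congrFun hgdef pb).symm, hpbL⟩
  · rw [SimpleGraph.fromRel_adj]
    exact ⟨hne, Or.inl ⟨i, hik, hai, hbi⟩⟩
  · intro hmem
    obtain ⟨t, ht, heq⟩ := AuxRIC.exists_getVert_of_mem_edges w hmem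
    exact hnon t ht heq
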